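/- arXiv:2302.03135 — 5 statements merged into one kernel-verified Lean document; each statement's English description precedes it below -/
import Mathlib

section
/- Let F̲, F̄ : ℝ → ℝ be nondecreasing with F̲ ≤ F̄, and let H ∈ I(F̲,F̄) be nondecreasing and right-continuous. Suppose there exists a countable collection of intervals {[x̲ₙ, x̄ₙ)}ₙ such that (1) H(x) ∈ {F̲(x), F̄(x)} for every x not in the union of these intervals, and (2) on each [x̲ₙ, x̄ₙ), H is constant and either H(x̄ₙ⁻) = F̲(x̄ₙ⁻) or H(x̲ₙ) = F̄(x̲ₙ). Then H is an extreme point of I(F̲,F̄): H cannot be written as λH₁ + (1−λ)H₂ with H₁ ≠ H₂ both in I(F̲,F̄) and λ ∈ (0,1). -/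
open Set Filter Function MeasureTheory

/-- A nondecreasing, right-continuous function on ℝ. -/
def MonoRC (H : ℝ → ℝ) : Prop :=
  Monotone H ∧ ∀ x : ℝ, ContinuousWithinAt H (Set.Ici x) x

/-- The monotone function interval `I(F̲, F̄)`. -/
def MFI (Fl Fu : ℝ → ℝ) : Set (ℝ → ℝ) :=
  {H | MonoRC H ∧ ∀ x, Fl x ≤ H x ∧ H x ≤ Fu x}

/-- Extreme point of a convex set of functions: no representation as a nontrivial
convex combination of two distinct elements. -/
def IsExtremePt (S : Set (ℝ → ℝ)) (H : ℝ → ℝ) : Prop :=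
  H ∈ S ∧ ∀ H₁ ∈ S, ∀ H₂ ∈ S, ∀ l : ℝ, l ∈ Set.Ioo (0:ℝ) 1 →
    (∀ x, H x = l * H₁ x + (1 - l) * H₂ x) → H₁ = H₂

/-- A cumulative distribution function on ℝ. -/
def IsCDF (G : ℝ → ℝ) : Prop :=
  Monotone G ∧ (∀ x : ℝ, ContinuousWithinAt G (Set.Ici x) x) ∧
    Filter.Tendsto G Filter.atBot (nhds 0) ∧ Filter.Tendsto G Filter.atTop (nhds 1)

/-- The quantile function `G⁻¹(τ) = inf {x | G x ≥ τ}`. -/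
noncomputable def quantile (G : ℝ → ℝ) (τ : ℝ) : ℝ := sInf {x | τ ≤ G x}

/-- The right limit of the quantile function, `G⁻¹(τ⁺) = inf {x | G x > τ}`. -/
noncomputable def quantilePlus (G : ℝ → ℝ) (τ : ℝ) : ℝ := sInf {x | τ < G x}

/-- Left truncation of a prior: `F_L^τ(ω) = min {F(ω)/τ, 1}`. -/
noncomputable def FL (F : ℝ → ℝ) (τ : ℝ) (ω : ℝ) : ℝ := min (F ω / τ) 1

/-- Right truncation of a prior: `F_R^τ(ω) = max {(F(ω) − τ)/(1 − τ), 0}`. -/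
noncomputable def FR (F : ℝ → ℝ) (τ : ℝ) (ω : ℝ) : ℝ := max ((F ω - τ) / (1 - τ)) 0

lemma combo_ge {u v c l : ℝ} (hl0 : 0 < l) (hl1 : l < 1)
    (ha : c ≤ u) (hb : c ≤ v) (h : l * u + (1 - l) * v = c) : u = c ∧ v = c := by
  constructor <;> nlinarith

lemma combo_le {u v c l : ℝ} (hl0 : 0 < l) (hl1 : l < 1)
    (ha : u ≤ c) (hb : v ≤ c) (h : l * u + (1 - l) * v = c) : u = c ∧ v = c := by
  constructor <;> nlinarith

/-- sufficiency of conditions 1 and 2 for extremality. -/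
theorem stmt1 (Fl Fu H : ℝ → ℝ) (hFl : Monotone Fl) (hFu : Monotone Fu)
    (hle : ∀ x, Fl x ≤ Fu x) (hH : H ∈ MFI Fl Fu)
    (a b : ℕ → ℝ)
    (h1 : ∀ x, (∀ n, x ∉ Set.Ico (a n) (b n)) → H x = Fl x ∨ H x = Fu x)
    (h2 : ∀ n, (∀ x ∈ Set.Ico (a n) (b n), ∀ y ∈ Set.Ico (a n) (b n), H x = H y) ∧
      (Function.leftLim H (b n) = Function.leftLim Fl (b n) ∨ H (a n) = Fu (a n))) :
    IsExtremePt (MFI Fl Fu) H := by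
  obtain ⟨⟨hHm, hHrc⟩, hHb⟩ := hH
  refine ⟨⟨⟨hHm, hHrc⟩, hHb⟩, ?_⟩
  rintro H₁ ⟨⟨h1m, _⟩, h1b⟩ H₂ ⟨⟨h2m, _⟩, h2b⟩ l ⟨hl0, hl1⟩ hcomb
  funext x
  by_cases hx : ∀ n, x ∉ Set.Ico (a n) (b n)
  · rcases h1 x hx with hFlx | hFux
    · obtain ⟨e1, e2⟩ := combo_ge hl0 hl1 (hFlx ▸ (h1b x).1) (hFlx ▸ (h2b x).1)
        (hcomb x).symm
      rw [e1, e2]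
    · obtain ⟨e1, e2⟩ := combo_le hl0 hl1 (hFux ▸ (h1b x).2) (hFux ▸ (h2b x).2)
        (hcomb x).symm
      rw [e1, e2]
  · push_neg at hx
    obtain ⟨n, hxn⟩ := hx
    obtain ⟨hconst, halt⟩ := h2 n
    rcases halt with hL | hU
    · -- leftLim case
      have hab : a n < b n := lt_of_le_of_lt hxn.1 hxn.2
      -- H tends to H x at (b n)⁻
      have hmem : Set.Ioo (a n) (b n) ∈ nhdsWithin (b n) (Set.Iio (b n)) :=
        Ioo_mem_nhdsLT_of_mem ⟨hab, le_refl _⟩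
      have htend : Filter.Tendsto H (nhdsWithin (b n) (Set.Iio (b n))) (nhds (H x)) := by
        refine Filter.Tendsto.congr' ?_ tendsto_const_nhds
        filter_upwards [hmem] with y hy
        exact hconst x hxn y ⟨le_of_lt hy.1, hy.2⟩
      have hLH : Function.leftLim H (b n) = H x :=
        tendsto_nhds_unique (hHm.tendsto_leftLim (b n)) htend
      -- leftLim of the combination
      have ht1 := h1m.tendsto_leftLim (b n)
      have ht2 := h2m.tendsto_leftLim (b n)
      have htc : Filter.Tendsto H (nhdsWithin (b n) (Set.Iio (b n)))
          (nhds (l * Function.leftLim H₁ (b n) + (1 - l) * Function.leftLim H₂ (b n))) := by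
        have := ((ht1.const_mul l).add (ht2.const_mul (1 - l)))
        exact this.congr fun y => (hcomb y).symm
      have hsum : l * Function.leftLim H₁ (b n) + (1 - l) * Function.leftLim H₂ (b n)
          = H x := tendsto_nhds_unique htc htend
      have hFl1 : Function.leftLim Fl (b n) ≤ Function.leftLim H₁ (b n) :=
        le_of_tendsto_of_tendsto' (hFl.tendsto_leftLim (b n)) ht1 fun y => (h1b y).1
      have hFl2 : Function.leftLim Fl (b n) ≤ Function.leftLim H₂ (b n) :=
        le_of_tendsto_of_tendsto' (hFl.tendsto_leftLim (b n)) ht2 fun y => (h2b y).1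
      have hFlH : Function.leftLim Fl (b n) = H x := by rw [← hL, hLH]
      obtain ⟨e1, e2⟩ := combo_ge hl0 hl1 (hFlH ▸ hFl1) (hFlH ▸ hFl2) hsum
      have h1x : H₁ x ≤ H x := e1 ▸ h1m.le_leftLim hxn.2
      have h2x : H₂ x ≤ H x := e2 ▸ h2m.le_leftLim hxn.2
      obtain ⟨f1, f2⟩ := combo_le hl0 hl1 h1x h2x (hcomb x).symm
      rw [f1, f2]
    · -- H (a n) = Fu (a n) case
      obtain ⟨e1, e2⟩ := combo_le hl0 hl1 (hU ▸ (h1b (a n)).2) (hU ▸ (h2b (a n)).2)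
        (hcomb (a n)).symm
      have hHx : H x = H (a n) := hconst x hxn (a n) ⟨le_refl _, lt_of_le_of_lt hxn.1 hxn.2⟩
      have h1x : H x ≤ H₁ x := by rw [hHx, ← e1]; exact h1m hxn.1
      have h2x : H x ≤ H₂ x := by rw [hHx, ← e2]; exact h2m hxn.1
      obtain ⟨f1, f2⟩ := combo_ge hl0 hl1 h1x h2x (hcomb x).symm
      rw [f1, f2]
end

section
/- Let h : [c,d] → [α,β] be nondecreasing and right-continuous, where c < d and α < β. If h is an extreme point of the convex set of all nondecreasing right-continuous functions from [c,d] to [α,β], then h takes at most two values, namely h(x) ∈ {α, β} for all x (i.e., h is a step function with at most one jump from α to β). -/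
open Set Filter Function MeasureTheory

/-- extreme points of uniformly bounded monotone right-continuous
functions on an interval are one-jump step functions taking only the values α, β. -/
theorem stmt5 (c d α β : ℝ) (hcd : c < d) (hαβ : α < β)
    (S : Set (Set.Icc c d → ℝ))
    (hS : S = {h : Set.Icc c d → ℝ | Monotone h ∧
      (∀ x, ContinuousWithinAt h (Set.Ici x) x) ∧ ∀ x, α ≤ h x ∧ h x ≤ β})
    (h : Set.Icc c d → ℝ) (hmem : h ∈ S)
    (hext : ∀ h₁ ∈ S, ∀ h₂ ∈ S, ∀ l : ℝ, l ∈ Set.Ioo (0:ℝ) 1 →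
      (∀ x, h x = l * h₁ x + (1 - l) * h₂ x) → h₁ = h₂) :
    ∀ x, h x = α ∨ h x = β := by
  subst hS
  obtain ⟨hmono, hrc, hbd⟩ := hmem
  intro x
  by_contra hx
  push_neg at hx
  obtain ⟨hxα, hxβ⟩ := hx
  have hα : α < h x := lt_of_le_of_ne (hbd x).1 (Ne.symm hxα)
  have hβ : h x < β := lt_of_le_of_ne (hbd x).2 hxβ
  set φ : ℝ → ℝ := fun y => min (y - α) (β - y) with hφdef
  set f₁ : ℝ → ℝ := fun y => y + φ y / 2 with hf₁def
  set f₂ : ℝ → ℝ := fun y => y - φ y / 2 with hf₂def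
  have hφc : Continuous φ := (continuous_id.sub continuous_const).min
    (continuous_const.sub continuous_id)
  have hf₁c : Continuous f₁ := continuous_id.add (hφc.div_const 2)
  have hf₂c : Continuous f₂ := continuous_id.sub (hφc.div_const 2)
  have hf₁m : Monotone f₁ := by
    intro a b hab
    have h1 : min (a - α) (β - a) ≤ a - α := min_le_left _ _
    have h2 : min (a - α) (β - a) ≤ β - a := min_le_right _ _
    rcases min_cases (b - α) (β - b) with ⟨he, _⟩ | ⟨he, _⟩ <;>
      simp only [f₁, φ, he] <;> linarith
  have hf₂m : Monotone f₂ := by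
    intro a b hab
    have h1 : min (b - α) (β - b) ≤ b - α := min_le_left _ _
    have h2 : min (b - α) (β - b) ≤ β - b := min_le_right _ _
    rcases min_cases (a - α) (β - a) with ⟨he, _⟩ | ⟨he, _⟩ <;>
      simp only [f₂, φ, he] <;> linarith
  have hbnd : ∀ y : Set.Icc c d, α ≤ f₁ (h y) ∧ f₁ (h y) ≤ β ∧
      α ≤ f₂ (h y) ∧ f₂ (h y) ≤ β := by
    intro y
    obtain ⟨hy1, hy2⟩ := hbd y
    have h1 : min (h y - α) (β - h y) ≤ h y - α := min_le_left _ _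
    have h2 : min (h y - α) (β - h y) ≤ β - h y := min_le_right _ _
    have h3 : (0:ℝ) ≤ min (h y - α) (β - h y) := le_min (by linarith) (by linarith)
    refine ⟨?_, ?_, ?_, ?_⟩ <;> simp only [f₁, f₂, φ] <;> linarith
  have hmem1 : (fun y => f₁ (h y)) ∈ {h : Set.Icc c d → ℝ | Monotone h ∧
      (∀ x, ContinuousWithinAt h (Set.Ici x) x) ∧ ∀ x, α ≤ h x ∧ h x ≤ β} := by
    refine ⟨hf₁m.comp hmono, fun y => hf₁c.continuousAt.comp_continuousWithinAt (hrc y),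
      fun y => ⟨(hbnd y).1, (hbnd y).2.1⟩⟩
  have hmem2 : (fun y => f₂ (h y)) ∈ {h : Set.Icc c d → ℝ | Monotone h ∧
      (∀ x, ContinuousWithinAt h (Set.Ici x) x) ∧ ∀ x, α ≤ h x ∧ h x ≤ β} := by
    refine ⟨hf₂m.comp hmono, fun y => hf₂c.continuousAt.comp_continuousWithinAt (hrc y),
      fun y => ⟨(hbnd y).2.2.1, (hbnd y).2.2.2⟩⟩
  have key := hext _ hmem1 _ hmem2 (1/2) ⟨by norm_num, by norm_num⟩
    (fun y => by simp only [f₁, f₂, φ]; ring)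
  have keyx : f₁ (h x) = f₂ (h x) := congrFun key x
  have hpos : (0:ℝ) < min (h x - α) (β - h x) := lt_min (by linarith) (by linarith)
  simp only [f₁, f₂, φ] at keyx
  linarith
end

section
/- A nondecreasing right-continuous function H : ℝ → ℝ bounded between constants α and β (α < β) is an extreme point of the set of such functions if and only if there exists t ∈ ℝ ∪ {±∞} with H(x) = α for x < t and H(x) = β for x ≥ t. -/
open Set Filter Function MeasureTheory

private lemma aux_mono1 (α β a b : ℝ) (hab : a ≤ b) :
    a + 2⁻¹ * min (a - α) (β - a) ≤ b + 2⁻¹ * min (b - α) (β - b) := by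
  rcases le_total (a - α) (β - a) with h1 | h1 <;>
    rcases le_total (b - α) (β - b) with h2 | h2 <;>
      simp only [min_eq_left, min_eq_right, h1, h2] <;> linarith

private lemma aux_mono2 (α β a b : ℝ) (hab : a ≤ b) :
    a - 2⁻¹ * min (a - α) (β - a) ≤ b - 2⁻¹ * min (b - α) (β - b) := by
  rcases le_total (a - α) (β - a) with h1 | h1 <;>
    rcases le_total (b - α) (β - b) with h2 | h2 <;>
      simp only [min_eq_left, min_eq_right, h1, h2] <;> linarith

/-- extreme points of monotone functions between two constants are
exactly the one-jump step functions (with possibly infinite jump location). -/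
theorem stmt6 (α β : ℝ) (hαβ : α < β) (H : ℝ → ℝ)
    (hH : H ∈ MFI (fun _ => α) (fun _ => β)) :
    IsExtremePt (MFI (fun _ => α) (fun _ => β)) H ↔
      ∃ t : EReal, ∀ x : ℝ,
        ((x : EReal) < t → H x = α) ∧ (t ≤ (x : EReal) → H x = β) := by
  obtain ⟨⟨hmono, hrc⟩, hbd⟩ := hH
  constructor
  · rintro ⟨-, hext⟩
    -- Step 1: H only takes values α and β
    have hval : ∀ x, H x = α ∨ H x = β := by
      intro x
      by_contra hx
      push_neg at hx
      obtain ⟨hxa, hxb⟩ := hx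
      have ha : α < H x := lt_of_le_of_ne (hbd x).1 (Ne.symm hxa)
      have hb : H x < β := lt_of_le_of_ne (hbd x).2 hxb
      set φ : ℝ → ℝ := fun u => u + 2⁻¹ * min (u - α) (β - u) with hφ
      set ψ : ℝ → ℝ := fun u => u - 2⁻¹ * min (u - α) (β - u) with hψ
      have hφc : Continuous φ := by
        apply Continuous.add continuous_id
        exact Continuous.mul continuous_const
          (Continuous.min (by fun_prop) (by fun_prop))
      have hψc : Continuous ψ := by
        apply Continuous.sub continuous_id
        exact Continuous.mul continuous_const
          (Continuous.min (by fun_prop) (by fun_prop))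
      have hmem₁ : φ ∘ H ∈ MFI (fun _ => α) (fun _ => β) := by
        refine ⟨⟨fun a b hab => aux_mono1 α β _ _ (hmono hab),
          fun y => hφc.continuousAt.comp_continuousWithinAt (hrc y)⟩, fun y => ?_⟩
        have h1 := (hbd y).1; have h2 := (hbd y).2
        constructor
        · have := le_min (by linarith : (0:ℝ) ≤ H y - α) (by linarith : (0:ℝ) ≤ β - H y)
          simp only [Function.comp_apply, hφ]
          nlinarith [min_le_right (H y - α) (β - H y)]
        · have := min_le_right (H y - α) (β - H y)
          simp only [Function.comp_apply, hφ]
          linarith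
      have hmem₂ : ψ ∘ H ∈ MFI (fun _ => α) (fun _ => β) := by
        refine ⟨⟨fun a b hab => aux_mono2 α β _ _ (hmono hab),
          fun y => hψc.continuousAt.comp_continuousWithinAt (hrc y)⟩, fun y => ?_⟩
        have h1 := (hbd y).1; have h2 := (hbd y).2
        constructor
        · have := min_le_left (H y - α) (β - H y)
          simp only [Function.comp_apply, hψ]
          linarith
        · have := le_min (by linarith : (0:ℝ) ≤ H y - α) (by linarith : (0:ℝ) ≤ β - H y)
          simp only [Function.comp_apply, hψ]
          linarith
      have hcomb : ∀ y, H y = (1/2 : ℝ) * (φ ∘ H) y + (1 - 1/2) * (ψ ∘ H) y := by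
        intro y
        simp only [Function.comp_apply, hφ, hψ]
        ring
      have heq := hext (φ ∘ H) hmem₁ (ψ ∘ H) hmem₂ (1/2)
        ⟨by norm_num, by norm_num⟩ hcomb
      have := congrFun heq x
      simp only [Function.comp_apply, hφ, hψ] at this
      have hmin : 0 < min (H x - α) (β - H x) := lt_min (by linarith) (by linarith)
      linarith
    -- Step 2: construct the jump point t
    refine ⟨sInf ((fun r : ℝ => (r : EReal)) '' {r | H r = β}), ?_⟩
    intro x
    constructor
    · intro hx
      rcases hval x with h | h
      · exact h
      · have hmem : (x : EReal) ∈ (fun r : ℝ => (r : EReal)) '' {r | H r = β} :=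
          ⟨x, h, rfl⟩
        exact absurd (sInf_le hmem) (not_le_of_gt hx)
    · intro hx
      by_contra hne
      have hxα : H x = α := (hval x).resolve_right hne
      -- H equals β on (x, ∞)
      have hβright : ∀ s, x < s → H s = β := by
        intro s hs
        have hlt : sInf ((fun r : ℝ => (r : EReal)) '' {r | H r = β}) < (s : EReal) :=
          lt_of_le_of_lt hx (by exact_mod_cast hs)
        obtain ⟨_, ⟨r, hr, rfl⟩, hrs⟩ := sInf_lt_iff.mp hlt
        have hrs0 : (r : EReal) < (s : EReal) := hrs
        have hrs' : r ≤ s := le_of_lt (by exact_mod_cast hrs0)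
        exact le_antisymm (hbd s).2 (hr ▸ hmono hrs')
      have h1 : Filter.Tendsto H (nhdsWithin x (Set.Ioi x)) (nhds (H x)) :=
        (hrc x).tendsto.mono_left (nhdsWithin_mono x Set.Ioi_subset_Ici_self)
      have h2 : Filter.Tendsto H (nhdsWithin x (Set.Ioi x)) (nhds β) := by
        refine Filter.Tendsto.congr' ?_ tendsto_const_nhds
        filter_upwards [self_mem_nhdsWithin] with s hs
        exact (hβright s hs).symm
      have := tendsto_nhds_unique h1 h2
      rw [hxα] at this
      exact absurd this (ne_of_lt hαβ)
  · rintro ⟨t, ht⟩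
    refine ⟨⟨⟨hmono, hrc⟩, hbd⟩, ?_⟩
    intro H₁ hm1 H₂ hm2 l hl heq
    obtain ⟨hl0, hl1⟩ := hl
    funext x
    have e := heq x
    rcases lt_or_ge (x : EReal) t with h | h
    · have hx := (ht x).1 h
      have h1a := (hm1.2 x).1
      have h2a := (hm2.2 x).1
      have k1 : l * (H₁ x - α) = 0 := by nlinarith
      have k2 : (1 - l) * (H₂ x - α) = 0 := by nlinarith
      have e1 : H₁ x = α := by
        rcases mul_eq_zero.mp k1 with h' | h'
        · exact absurd h' (ne_of_gt hl0)
        · linarith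
      have e2 : H₂ x = α := by
        rcases mul_eq_zero.mp k2 with h' | h'
        · exact absurd h' (ne_of_gt (by linarith : (0:ℝ) < 1 - l))
        · linarith
      rw [e1, e2]
    · have hx := (ht x).2 h
      have h1b := (hm1.2 x).2
      have h2b := (hm2.2 x).2
      have k1 : l * (β - H₁ x) = 0 := by nlinarith
      have k2 : (1 - l) * (β - H₂ x) = 0 := by nlinarith
      have e1 : H₁ x = β := by
        rcases mul_eq_zero.mp k1 with h' | h'
        · exact absurd h' (ne_of_gt hl0)
        · linarith
      have e2 : H₂ x = β := by
        rcases mul_eq_zero.mp k2 with h' | h'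
        · exact absurd h' (ne_of_gt (by linarith : (0:ℝ) < 1 - l))
        · linarith
      rw [e1, e2]
end

section
/- Let F be a CDF, τ ∈ (0,1), and let μ be a signal (a probability measure on CDFs with ∫ G(ω) μ(dG) = F(ω) for all ω) and r a τ-quantile selection rule. Let H be the induced distribution of posterior τ-quantiles. Then F_R^τ(ω) ≤ H(ω) ≤ F_L^τ(ω) for all ω ∈ ℝ, where F_L^τ(ω) = min{F(ω)/τ, 1} and F_R^τ(ω) = max{(F(ω)−τ)/(1−τ), 0}. -/
open Set Filter Function MeasureTheory

lemma cdf_nonneg {G : ℝ → ℝ} (hG : IsCDF G) (ω : ℝ) : 0 ≤ G ω :=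
  le_of_tendsto hG.2.2.1 (eventually_atBot.2 ⟨ω, fun y hy => hG.1 hy⟩)

lemma cdf_le_one {G : ℝ → ℝ} (hG : IsCDF G) (ω : ℝ) : G ω ≤ 1 :=
  ge_of_tendsto hG.2.2.2 (eventually_atTop.2 ⟨ω, fun y hy => hG.1 hy⟩)

lemma cdf_bddBelow {G : ℝ → ℝ} (hG : IsCDF G) {τ : ℝ} (hτ : 0 < τ) :
    BddBelow {x | τ ≤ G x} := by
  obtain ⟨b, hb⟩ := eventually_atBot.1 (hG.2.2.1.eventually (eventually_lt_nhds hτ))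
  exact ⟨b, fun y hy => le_of_not_ge fun h => absurd hy (not_le.2 (hb y h))⟩

lemma quantile_le_imp {G : ℝ → ℝ} (hG : IsCDF G) {τ : ℝ} (hτ0 : 0 < τ) (hτ1 : τ < 1)
    {ω : ℝ} (h : quantile G τ ≤ ω) : τ ≤ G ω := by
  have hne : {x | τ ≤ G x}.Nonempty :=
    (eventually_atTop.1 (hG.2.2.2.eventually (eventually_ge_nhds hτ1))).imp
      (fun b hb => hb b le_rfl)
  have hbdd := cdf_bddBelow hG hτ0
  have key : ∀ y, ω < y → τ ≤ G y := by
    intro y hy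
    obtain ⟨s, hs, hsy⟩ := (csInf_lt_iff hbdd hne).1 (lt_of_le_of_lt h hy)
    exact le_trans hs (hG.1 hsy.le)
  have htend : Tendsto G (nhdsWithin ω (Set.Ioi ω)) (nhds (G ω)) :=
    (hG.2.1 ω).mono_left (nhdsWithin_mono ω Set.Ioi_subset_Ici_self)
  exact ge_of_tendsto htend (eventually_mem_nhdsWithin.mono (fun y hy => key y hy))

lemma lt_quantilePlus_imp {G : ℝ → ℝ} (hG : IsCDF G) {τ : ℝ} (hτ0 : 0 < τ)
    {ω : ℝ} (h : ω < quantilePlus G τ) : G ω ≤ τ := by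
  by_contra hc
  push_neg at hc
  have hbdd : BddBelow {x | τ < G x} := by
    obtain ⟨b, hb⟩ := eventually_atBot.1 (hG.2.2.1.eventually (eventually_lt_nhds hτ0))
    exact ⟨b, fun y hy => le_of_not_ge fun hyb => absurd hy (not_lt.2 (hb y hyb).le)⟩
  exact absurd (csInf_le hbdd hc) (not_le.2 h)

/-- the distribution of posterior τ-quantiles induced by any signal and
selection rule is sandwiched between the truncations F_R^τ and F_L^τ. -/
theorem stmt11 {X : Type*} [MeasurableSpace X] (μ : Measure X)
    [IsProbabilityMeasure μ]
    (F : ℝ → ℝ) (hF : IsCDF F) (τ : ℝ) (hτ : τ ∈ Set.Ioo (0:ℝ) 1)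
    (G : X → ℝ → ℝ) (hG : ∀ x, IsCDF (G x))
    (hmeas : ∀ ω : ℝ, Measurable fun x => G x ω)
    (hbar : ∀ ω : ℝ, ∫ x, G x ω ∂μ = F ω)
    (r : X → Measure ℝ) (hr : ∀ x, IsProbabilityMeasure (r x))
    (hsupp : ∀ x, r x (Set.Icc (quantile (G x) τ) (quantilePlus (G x) τ)) = 1)
    (hrmeas : ∀ ω : ℝ, Measurable fun x => ((r x) (Set.Iic ω)).toReal)
    (H : ℝ → ℝ) (hH : ∀ ω : ℝ, H ω = ∫ x, ((r x) (Set.Iic ω)).toReal ∂μ) :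
    ∀ ω : ℝ, FR F τ ω ≤ H ω ∧ H ω ≤ FL F τ ω := by
  obtain ⟨hτ0, hτ1⟩ := hτ
  intro ω
  set f : X → ℝ := fun x => ((r x) (Set.Iic ω)).toReal with hfdef
  have hfnn : ∀ x, 0 ≤ f x := fun x => ENNReal.toReal_nonneg
  have hf1 : ∀ x, f x ≤ 1 := by
    intro x
    have := hr x
    have h1 : (r x) (Set.Iic ω) ≤ 1 := prob_le_one
    calc f x ≤ (1 : ENNReal).toReal := ENNReal.toReal_mono ENNReal.one_ne_top h1
      _ = 1 := by simp
  -- pointwise upper bound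
  have hub : ∀ x, f x ≤ G x ω / τ := by
    intro x
    rcases le_or_gt (quantile (G x) τ) ω with h | h
    · have hτG : τ ≤ G x ω := quantile_le_imp (hG x) hτ0 hτ1 h
      have : (1:ℝ) ≤ G x ω / τ := (one_le_div hτ0).2 hτG
      exact (hf1 x).trans this
    · have hzero : (r x) (Set.Iic ω) = 0 := by
        have := hr x
        have hsub : Set.Iic ω ⊆ (Set.Icc (quantile (G x) τ) (quantilePlus (G x) τ))ᶜ := by
          intro t ht hmem
          exact absurd hmem.1 (not_le.2 (lt_of_le_of_lt ht h))
        have hcompl : (r x) (Set.Icc (quantile (G x) τ) (quantilePlus (G x) τ))ᶜ = 0 := by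
          rw [measure_compl measurableSet_Icc (measure_ne_top _ _), hsupp x, measure_univ, tsub_self]
        exact measure_mono_null hsub hcompl
      simp only [hfdef, hzero, ENNReal.toReal_zero]
      exact div_nonneg (cdf_nonneg (hG x) ω) hτ0.le
  -- pointwise lower bound
  have hlb : ∀ x, (G x ω - τ) / (1 - τ) ≤ f x := by
    intro x
    rcases le_or_gt (quantilePlus (G x) τ) ω with h | h
    · have : (G x ω - τ) / (1 - τ) ≤ 1 := by
        rw [div_le_one (by linarith)]
        linarith [cdf_le_one (hG x) ω]
      refine this.trans ?_
      have := hr x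
      have hone : (r x) (Set.Iic ω) = 1 := by
        refine le_antisymm prob_le_one ?_
        calc (1:ENNReal) = r x (Set.Icc (quantile (G x) τ) (quantilePlus (G x) τ)) := (hsupp x).symm
          _ ≤ r x (Set.Iic ω) := measure_mono (fun t ht => le_trans ht.2 h)
      simp [hfdef, hone]
    · have hG' : G x ω ≤ τ := lt_quantilePlus_imp (hG x) hτ0 h
      have : (G x ω - τ) / (1 - τ) ≤ 0 :=
        div_nonpos_of_nonpos_of_nonneg (by linarith) (by linarith)
      exact this.trans (hfnn x)
  -- integrability
  have hfmeas : Measurable f := hrmeas ω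
  have hfint : Integrable f μ := by
    refine Integrable.mono' (integrable_const (1:ℝ)) hfmeas.aestronglyMeasurable ?_
    exact Filter.Eventually.of_forall fun x => by
      rw [Real.norm_eq_abs, abs_of_nonneg (hfnn x)]; exact hf1 x
  have hgint : Integrable (fun x => G x ω) μ := by
    refine Integrable.mono' (integrable_const (1:ℝ)) (hmeas ω).aestronglyMeasurable ?_
    exact Filter.Eventually.of_forall fun x => by
      rw [Real.norm_eq_abs, abs_of_nonneg (cdf_nonneg (hG x) ω)]
      exact cdf_le_one (hG x) ω
  have hHω : H ω = ∫ x, f x ∂μ := hH ω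
  constructor
  · -- FR ≤ H ω
    rw [FR, hHω]
    refine max_le ?_ (integral_nonneg hfnn)
    have h1 : ∫ x, (G x ω - τ) / (1 - τ) ∂μ ≤ ∫ x, f x ∂μ := by
      refine integral_mono ?_ hfint hlb
      exact (hgint.sub (integrable_const τ)).div_const _
    calc (F ω - τ) / (1 - τ) = ∫ x, (G x ω - τ) / (1 - τ) ∂μ := by
          rw [integral_div, integral_sub hgint (integrable_const τ), hbar, integral_const,
            probReal_univ, one_smul]
      _ ≤ ∫ x, f x ∂μ := h1
  · -- H ω ≤ FL
    rw [FL, hHω]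
    refine le_min ?_ ?_
    · have h1 : ∫ x, f x ∂μ ≤ ∫ x, G x ω / τ ∂μ :=
        integral_mono hfint (hgint.div_const _) hub
      calc ∫ x, f x ∂μ ≤ ∫ x, G x ω / τ ∂μ := h1
        _ = F ω / τ := by rw [integral_div, hbar]
    · calc ∫ x, f x ∂μ ≤ ∫ _x, (1:ℝ) ∂μ := integral_mono hfint (integrable_const 1) hf1
        _ = 1 := by simp
end

section
/- Let H : [0,1] → ℝ be nondecreasing, right-continuous, with 0 ≤ H(x) ≤ x for all x. Suppose there exists an interval [a,b) ⊆ [0,1] with a < b and a value c with 0 < H(x) and H(x) < x for all x ∈ [a,b), such that H restricted to [a,b) is not a step function with at most one jump. Then H is not an extreme point of the convex set {H nondecreasing, right-continuous, 0 ≤ H(x) ≤ x}: there exist distinct H₁ ≠ H₂ in this set and λ ∈ (0,1) with H = λH₁ + (1−λ)H₂, where H₁ and H₂ agree with H outside a subinterval of [a,b). -/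
open Set Filter Function MeasureTheory

open Topology

lemma gkey18 (α β u v : ℝ) (h : u ≤ v) :
    max 0 (min (u-α) (β-u)) - max 0 (min (v-α) (β-v)) ≤ v - u ∧
    max 0 (min (v-α) (β-v)) - max 0 (min (u-α) (β-u)) ≤ v - u := by
  constructor <;>
  · rcases max_cases 0 (min (u-α) (β-u)) with ⟨h1,h1'⟩|⟨h1,h1'⟩ <;>
    rcases max_cases 0 (min (v-α) (β-v)) with ⟨h2,h2'⟩|⟨h2,h2'⟩ <;>
    rcases min_cases (u-α) (β-u) with ⟨h3,h3'⟩|⟨h3,h3'⟩ <;>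
    rcases min_cases (v-α) (β-v) with ⟨h4,h4'⟩|⟨h4,h4'⟩ <;> linarith

/-- Step 1: a monotone right-continuous function on `[a,b)` that is not a one-jump
step function takes three strictly increasing values. -/
lemma threePoints18 (H : Set.Icc (0:ℝ) 1 → ℝ) (hmono : Monotone H)
    (hrc : ∀ x, ContinuousWithinAt H (Set.Ici x) x)
    (a b : Set.Icc (0:ℝ) 1) (hab : a < b)
    (hnotstep : ¬ ∃ t ∈ Set.Icc a b,
      (∀ x ∈ Set.Ico a t, ∀ y ∈ Set.Ico a t, H x = H y) ∧
      (∀ x ∈ Set.Ico t b, ∀ y ∈ Set.Ico t b, H x = H y)) :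
    ∃ p ∈ Set.Ico a b, ∃ q ∈ Set.Ico a b, ∃ r ∈ Set.Ico a b, H p < H q ∧ H q < H r := by
  by_contra hc
  push_neg at hc
  have hamem : a ∈ Set.Ico a b := ⟨le_rfl, hab⟩
  -- all points above the base value H a share a single value
  have pairEq : ∀ v₁ ∈ Set.Ico a b, ∀ v₂ ∈ Set.Ico a b,
      H a < H v₁ → H a < H v₂ → H v₁ = H v₂ := by
    intro v₁ h₁ v₂ h₂ hv₁ hv₂
    rcases lt_trichotomy (H v₁) (H v₂) with h | h | h
    · exact absurd h (not_lt.mpr (hc a hamem v₁ h₁ v₂ h₂ hv₁))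
    · exact h
    · exact absurd h (not_lt.mpr (hc a hamem v₂ h₂ v₁ h₁ hv₂))
  by_cases hV : ∃ v ∈ Set.Ico a b, H a < H v
  · obtain ⟨v₀, hv₀, hv₀H⟩ := hV
    set Vr : Set ℝ := {y | ∃ v : Set.Icc (0:ℝ) 1, (v : ℝ) = y ∧ v ∈ Set.Ico a b ∧ H a < H v}
      with hVr
    have hv₀Vr : (v₀ : ℝ) ∈ Vr := ⟨v₀, rfl, hv₀, hv₀H⟩
    have hne : Vr.Nonempty := ⟨_, hv₀Vr⟩
    have hbdd : BddBelow Vr := ⟨(a : ℝ), by rintro y ⟨v, rfl, hv, -⟩; exact hv.1⟩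
    set t' : ℝ := sInf Vr with ht'
    have hta : (a : ℝ) ≤ t' := le_csInf hne (by rintro y ⟨v, rfl, hv, -⟩; exact hv.1)
    have htv₀ : t' ≤ (v₀ : ℝ) := csInf_le hbdd hv₀Vr
    have htb : t' < (b : ℝ) := lt_of_le_of_lt htv₀ hv₀.2
    have ht01 : t' ∈ Set.Icc (0:ℝ) 1 := ⟨a.2.1.trans hta, htb.le.trans b.2.2⟩
    set t : Set.Icc (0:ℝ) 1 := ⟨t', ht01⟩ with htdef
    have htmem : t ∈ Set.Icc a b := ⟨hta, htb.le⟩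
    have hat : a ≤ t := hta
    have htble : t ≤ b := htb.le
    -- constant on [a,t)
    have const1 : ∀ x ∈ Set.Ico a t, H x = H a := by
      intro x hx
      have hxt : (x : ℝ) < t' := hx.2
      have hxb : x < b := lt_of_lt_of_le hx.2 htble
      have hnot : ¬ H a < H x := by
        intro hlt
        exact absurd (csInf_le hbdd ⟨x, rfl, ⟨hx.1, hxb⟩, hlt⟩) (not_le.mpr hxt)
      exact le_antisymm (not_lt.mp hnot) (hmono hx.1)
    set m : ℝ := H v₀ with hm
    -- constant on (t,b)
    have const2' : ∀ x ∈ Set.Ico t b, t < x → H x = m := by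
      intro x hx hlt
      obtain ⟨y, hyV, hylt⟩ := exists_lt_of_csInf_lt hne (show t' < (x:ℝ) from hlt)
      obtain ⟨v, rfl, hv, hvH⟩ := hyV
      have hvx : v ≤ x := le_of_lt hylt
      have hax : H a < H x := lt_of_lt_of_le hvH (hmono hvx)
      have hxmem : x ∈ Set.Ico a b := ⟨hat.trans hx.1, hx.2⟩
      exact (pairEq x hxmem v₀ hv₀ hax hv₀H)
    have const2 : ∀ x ∈ Set.Ico t b, H x = m := by
      intro x hx
      rcases eq_or_lt_of_le hx.1 with heq | hlt
      swap
      · exact const2' x hx hlt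
      -- x = t : right continuity
      rw [← heq]
      have hle : H t ≤ m := by
        have htv : t ≤ v₀ := htv₀
        exact hmono htv
      refine le_antisymm hle (not_lt.mp ?_)
      intro hlt'
      obtain ⟨δ, hδ, hδ'⟩ := Metric.continuousWithinAt_iff.mp (hrc t) (m - H t)
        (by linarith)
      obtain ⟨y₀, hy₀l, hy₀r⟩ := exists_between (lt_min htb (lt_add_of_pos_right t' hδ))
      have hy₀b : y₀ < (b : ℝ) := lt_of_lt_of_le hy₀r (min_le_left _ _)
      have hy₀δ : y₀ < t' + δ := lt_of_lt_of_le hy₀r (min_le_right _ _)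
      have hy01 : y₀ ∈ Set.Icc (0:ℝ) 1 := ⟨ht01.1.trans hy₀l.le, hy₀b.le.trans b.2.2⟩
      set y : Set.Icc (0:ℝ) 1 := ⟨y₀, hy01⟩ with hydef
      have hty : t < y := hy₀l
      have hym : H y = m := const2' y ⟨hty.le, hy₀b⟩ hty
      have hdist : dist y t < δ := by
        rw [Subtype.dist_eq, Real.dist_eq]
        show |y₀ - t'| < δ
        rw [abs_of_nonneg (by linarith)]
        linarith
      have hcl := hδ' (le_of_lt hty) hdist
      rw [hym, Real.dist_eq] at hcl
      have h2 := le_abs_self (m - H t)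
      linarith
    exact hnotstep ⟨t, htmem,
      fun x hx y hy => (const1 x hx).trans (const1 y hy).symm,
      fun x hx y hy => (const2 x hx).trans (const2 y hy).symm⟩
  · push_neg at hV
    refine hnotstep ⟨b, ⟨hab.le, le_rfl⟩, ?_, ?_⟩
    · intro x hx y hy
      have hxa : H x = H a := le_antisymm (hV x hx) (hmono hx.1)
      have hya : H y = H a := le_antisymm (hV y hy) (hmono hy.1)
      rw [hxa, hya]
    · intro x hx
      exact absurd (lt_of_le_of_lt hx.1 hx.2) (lt_irrefl b)

/-- Step 2: uniform gap below the diagonal on a compact interval. -/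
lemma gap18 (H : Set.Icc (0:ℝ) 1 → ℝ) (hmono : Monotone H)
    (hrc : ∀ x, ContinuousWithinAt H (Set.Ici x) x)
    (p r : Set.Icc (0:ℝ) 1)
    (hlt : ∀ x ∈ Set.Icc p r, H x < (x : ℝ)) :
    ∃ δ > 0, ∀ x ∈ Set.Icc p r, δ ≤ (x : ℝ) - H x := by
  by_cases hpr : p ≤ r
  swap
  · exact ⟨1, one_pos, fun x hx => absurd (hx.1.trans hx.2) hpr⟩
  haveI : CompactSpace (Set.Icc (0:ℝ) 1) := isCompact_iff_compactSpace.mp isCompact_Icc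
  have hKeq : (Set.Icc p r : Set (Set.Icc (0:ℝ) 1))
      = Subtype.val ⁻¹' (Set.Icc (p:ℝ) (r:ℝ)) := by
    ext x; simp [Set.mem_Icc]
  have hK : IsCompact (Set.Icc p r : Set (Set.Icc (0:ℝ) 1)) := by
    rw [hKeq]
    exact (isClosed_Icc.preimage continuous_subtype_val).isCompact
  set c : Set.Icc (0:ℝ) 1 → ℝ := fun x => ((x : ℝ) - H x)/2 with hc
  have hcpos : ∀ x ∈ Set.Icc p r, 0 < c x := fun x hx => by
    have := hlt x hx; simp [hc]; linarith
  have key : ∀ x₀ ∈ Set.Icc p r, ∃ u ∈ 𝓝 x₀, ∀ y ∈ u, c x₀ ≤ (y : ℝ) - H y := by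
    intro x₀ hx₀
    have hc₀ : 0 < c x₀ := hcpos x₀ hx₀
    have hT : Tendsto H (𝓝[Set.Ici x₀] x₀) (𝓝 (H x₀)) := hrc x₀
    have hev : {y | H y < H x₀ + c x₀} ∈ 𝓝[Set.Ici x₀] x₀ :=
      hT (Iio_mem_nhds (lt_add_of_pos_right _ hc₀))
    obtain ⟨O, hOopen, hx₀O, hOsub⟩ := mem_nhdsWithin.mp hev
    refine ⟨O ∩ Subtype.val ⁻¹' Set.Ioi ((x₀ : ℝ) - c x₀),
      (hOopen.inter (isOpen_Ioi.preimage continuous_subtype_val)).mem_nhds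
        ⟨hx₀O, by simp; linarith⟩, ?_⟩
    rintro y ⟨hyO, hyI⟩
    simp only [Set.mem_preimage, Set.mem_Ioi] at hyI
    rcases le_total x₀ y with hxy | hyx
    · have hHy : H y < H x₀ + c x₀ := hOsub ⟨hyO, hxy⟩
      have hcoe : (x₀ : ℝ) ≤ (y : ℝ) := hxy
      have : H x₀ = (x₀ : ℝ) - 2 * c x₀ := by simp [hc]; ring
      linarith
    · have hHy : H y ≤ H x₀ := hmono hyx
      have : H x₀ = (x₀ : ℝ) - 2 * c x₀ := by simp [hc]; ring
      linarith
  choose! U hU1 hU2 using key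
  obtain ⟨t, htK, hcover⟩ := hK.elim_nhds_subcover U hU1
  have hpmem : p ∈ Set.Icc p r := ⟨le_rfl, hpr⟩
  have htne : t.Nonempty := by
    obtain ⟨x₀, hx₀t, -⟩ := Set.mem_iUnion₂.mp (hcover hpmem)
    exact ⟨x₀, hx₀t⟩
  refine ⟨t.inf' htne c, (Finset.lt_inf'_iff htne).mpr
    (fun x₀ hx₀ => hcpos x₀ (htK x₀ hx₀)), ?_⟩
  intro x hx
  obtain ⟨x₀, hx₀t, hxU⟩ := Set.mem_iUnion₂.mp (hcover hx)
  exact (Finset.inf'_le c hx₀t).trans (hU2 x₀ (htK x₀ hx₀t) x hxU)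

/-- rectangle-perturbation argument: a strictly interior piece that is
not a one-jump step function destroys extremality. -/
theorem stmt18
    (S : Set (Set.Icc (0:ℝ) 1 → ℝ))
    (hS : S = {H : Set.Icc (0:ℝ) 1 → ℝ | Monotone H ∧
      (∀ x, ContinuousWithinAt H (Set.Ici x) x) ∧ ∀ x, 0 ≤ H x ∧ H x ≤ (x : ℝ)})
    (H : Set.Icc (0:ℝ) 1 → ℝ) (hH : H ∈ S)
    (a b : Set.Icc (0:ℝ) 1) (hab : a < b)
    (hint : ∀ x ∈ Set.Ico a b, 0 < H x ∧ H x < (x : ℝ))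
    (hnotstep : ¬ ∃ t ∈ Set.Icc a b,
      (∀ x ∈ Set.Ico a t, ∀ y ∈ Set.Ico a t, H x = H y) ∧
      (∀ x ∈ Set.Ico t b, ∀ y ∈ Set.Ico t b, H x = H y)) :
    ∃ H₁ ∈ S, ∃ H₂ ∈ S, H₁ ≠ H₂ ∧ ∃ l ∈ Set.Ioo (0:ℝ) 1,
      (∀ x, H x = l * H₁ x + (1 - l) * H₂ x) ∧
      ∃ c d : Set.Icc (0:ℝ) 1, Set.Icc c d ⊆ Set.Ico a b ∧
        ∀ x, x ∉ Set.Icc c d → H₁ x = H x ∧ H₂ x = H x := by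
  subst hS
  obtain ⟨hmono, hrc, hbd⟩ := hH
  obtain ⟨p, hp, q, hq, r, hr, hpq, hqr⟩ := threePoints18 H hmono hrc a b hab hnotstep
  set α : ℝ := H p with hα
  set β : ℝ := H r with hβ
  have hαβ : α < β := hpq.trans hqr
  have hα0 : 0 < α := (hint p hp).1
  have hsub : Set.Icc p r ⊆ Set.Ico a b :=
    fun x hx => ⟨hp.1.trans hx.1, lt_of_le_of_lt hx.2 hr.2⟩
  obtain ⟨δ, hδpos, hgap⟩ := gap18 H hmono hrc p r
    (fun x hx => (hint x (hsub hx)).2)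
  set ε : ℝ := min 1 (δ / (β - α)) with hε
  have hεpos : 0 < ε := lt_min one_pos (div_pos hδpos (by linarith))
  have hε1 : ε ≤ 1 := min_le_left _ _
  have hεδ : ε * (β - α) ≤ δ := by
    calc ε * (β - α) ≤ (δ / (β - α)) * (β - α) :=
          mul_le_mul_of_nonneg_right (min_le_right _ _) (by linarith)
      _ = δ := div_mul_cancel₀ δ (by linarith)
  set G : Set.Icc (0:ℝ) 1 → ℝ := fun x => max 0 (min (H x - α) (β - H x)) with hG
  have hGnn : ∀ x, 0 ≤ G x := fun x => le_max_left _ _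
  have hGcases : ∀ x, G x = 0 ∨ (0 < G x ∧ G x ≤ H x - α ∧ G x ≤ β - H x) := by
    intro x
    rcases lt_or_eq_of_le (hGnn x) with hpos | h0
    · right
      have hm : 0 < min (H x - α) (β - H x) := by
        by_contra hh
        push_neg at hh
        rw [show G x = 0 from max_eq_left hh] at hpos
        exact lt_irrefl 0 hpos
      have hGe : G x = min (H x - α) (β - H x) := max_eq_right hm.le
      exact ⟨hpos, hGe ▸ min_le_left _ _, hGe ▸ min_le_right _ _⟩
    · left; exact h0.symm
  have hGkey : ∀ x y : Set.Icc (0:ℝ) 1, x ≤ y →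
      G x - G y ≤ H y - H x ∧ G y - G x ≤ H y - H x :=
    fun x y hxy => gkey18 α β (H x) (H y) (hmono hxy)
  -- the perturbations
  set H₁ : Set.Icc (0:ℝ) 1 → ℝ := fun x => H x + ε * G x with hH₁
  set H₂ : Set.Icc (0:ℝ) 1 → ℝ := fun x => H x - ε * G x with hH₂
  -- the support information: if G x > 0 then x ∈ Icc p r strictly inside
  have hGsupp : ∀ x, 0 < G x → p < x ∧ x < r := by
    intro x hx
    rcases hGcases x with h0 | ⟨-, h1, h2⟩
    · rw [h0] at hx; exact absurd hx (lt_irrefl 0)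
    · constructor
      · exact hmono.reflect_lt (show H p < H x by simp only [← hα]; linarith)
      · exact hmono.reflect_lt (show H x < H r by simp only [← hβ]; linarith)
  have hεG : ∀ x, 0 < G x → ε * G x ≤ (x : ℝ) - H x ∧ ε * G x ≤ H x - α := by
    intro x hx
    rcases hGcases x with h0 | ⟨-, h1, h2⟩
    · rw [h0] at hx; exact absurd hx (lt_irrefl 0)
    · obtain ⟨hpx, hxr⟩ := hGsupp x hx
      have hxmem : x ∈ Set.Icc p r := ⟨hpx.le, hxr.le⟩
      have hgx := hgap x hxmem
      have hαle : α ≤ H x := by linarith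
      constructor
      · have h3 : G x ≤ β - α := by linarith
        have : ε * G x ≤ ε * (β - α) := mul_le_mul_of_nonneg_left h3 hεpos.le
        linarith
      · have : ε * G x ≤ 1 * G x := mul_le_mul_of_nonneg_right hε1 (hGnn x)
        linarith
  have hcont : Continuous (fun y : ℝ => max 0 (min (y - α) (β - y))) := by
    exact continuous_const.max ((continuous_id.sub continuous_const).min
      (continuous_const.sub continuous_id))
  -- membership of H₁
  have hH₁S : Monotone H₁ ∧ (∀ x, ContinuousWithinAt H₁ (Set.Ici x) x) ∧
      ∀ x, 0 ≤ H₁ x ∧ H₁ x ≤ (x : ℝ) := by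
    refine ⟨?_, ?_, ?_⟩
    · intro x y hxy
      have h1 := (hGkey x y hxy).1
      have h2 : 0 ≤ H y - H x := sub_nonneg.mpr (hmono hxy)
      simp only [hH₁]
      nlinarith [mul_nonneg (sub_nonneg.mpr hε1) h2,
        mul_nonneg hεpos.le (sub_nonneg.mpr (show G x - G y ≤ H y - H x from h1))]
    · intro x
      have : ContinuousWithinAt
          ((fun y : ℝ => y + ε * max 0 (min (y - α) (β - y))) ∘ H) (Set.Ici x) x :=
        ((continuous_id.add (continuous_const.mul hcont)).continuousAt).comp_continuousWithinAt (hrc x)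
      exact this
    · intro x
      constructor
      · exact add_nonneg (hbd x).1 (mul_nonneg hεpos.le (hGnn x))
      · rcases hGcases x with h0 | ⟨hpos, -, -⟩
        · simp only [hH₁, h0, mul_zero, add_zero]; exact (hbd x).2
        · have := (hεG x hpos).1
          simp only [hH₁]; linarith
  -- membership of H₂
  have hH₂S : Monotone H₂ ∧ (∀ x, ContinuousWithinAt H₂ (Set.Ici x) x) ∧
      ∀ x, 0 ≤ H₂ x ∧ H₂ x ≤ (x : ℝ) := by
    refine ⟨?_, ?_, ?_⟩
    · intro x y hxy
      have h1 := (hGkey x y hxy).2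
      have h2 : 0 ≤ H y - H x := sub_nonneg.mpr (hmono hxy)
      simp only [hH₂]
      nlinarith [mul_nonneg (sub_nonneg.mpr hε1) h2,
        mul_nonneg hεpos.le (sub_nonneg.mpr (show G y - G x ≤ H y - H x from h1))]
    · intro x
      have : ContinuousWithinAt
          ((fun y : ℝ => y - ε * max 0 (min (y - α) (β - y))) ∘ H) (Set.Ici x) x :=
        ((continuous_id.sub (continuous_const.mul hcont)).continuousAt).comp_continuousWithinAt (hrc x)
      exact this
    · intro x
      constructor
      · rcases hGcases x with h0 | ⟨hpos, -, -⟩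
        · simp only [hH₂, h0, mul_zero, sub_zero]; exact (hbd x).1
        · have := (hεG x hpos).2
          simp only [hH₂]; linarith
      · have : H₂ x ≤ H x := by
          simp only [hH₂]
          linarith [mul_nonneg hεpos.le (hGnn x)]
        exact this.trans (hbd x).2
  have hGq : 0 < G q := by
    have h1 : 0 < min (H q - α) (β - H q) := lt_min (by linarith) (by linarith)
    calc (0:ℝ) < min (H q - α) (β - H q) := h1
      _ ≤ G q := le_max_right _ _
  refine ⟨H₁, hH₁S, H₂, hH₂S, ?_, (1:ℝ)/2, ⟨by norm_num, by norm_num⟩, ?_, p, r, hsub, ?_⟩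
  · intro heq
    have := congrFun heq q
    simp only [hH₁, hH₂] at this
    nlinarith
  · intro x
    simp only [hH₁, hH₂]; ring
  · intro x hx
    have hG0 : G x = 0 := by
      rcases lt_or_ge x p with hxp | hpx
      · have : H x ≤ α := hα ▸ hmono hxp.le
        have : min (H x - α) (β - H x) ≤ 0 := (min_le_left _ _).trans (by linarith)
        exact max_eq_left this
      · have hrx : r < x := by
          by_contra hh
          push_neg at hh
          exact hx ⟨hpx, hh⟩
        have : β ≤ H x := hβ ▸ hmono hrx.le
        have : min (H x - α) (β - H x) ≤ 0 := (min_le_right _ _).trans (by linarith)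
        exact max_eq_left this
    constructor <;> · simp only [hH₁, hH₂, hG0, mul_zero]; ring
end
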